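/- arXiv:1709.06964 — 7 statements merged into one kernel-verified Lean document; each statement's English description precedes it below -/
import Mathlib

section
/- Let n be a natural number, let I ⊆ ℝ be an interval, and let Ψ₀, Ω₀, ξ₀ : ℝ → ℝ be differentiable on I. Define, for τ ∈ ℝ and ρ > 0 with τ/ρ ∈ I, the functions Ψ(τ,ρ) = Ψ₀(τ/ρ)/ρ^n, Ω(τ,ρ) = Ω₀(τ/ρ)/ρ, ξ(τ,ρ) = ξ₀(τ/ρ)/ρ. If the consistency relation (∂Ψ/∂τ)(τ,ρ) · Ω(τ,ρ) = (∂Ψ/∂ρ)(τ,ρ) · ξ(τ,ρ) holds for all such (τ,ρ), then for every z ∈ I one has Ψ₀′(z)·(Ω₀(z) + z·ξ₀(z)) = −n·Ψ₀(z)·ξ₀(z). In particular, where Ψ₀(z) ≠ 0 and Ω₀(z) + z·ξ₀(z) ≠ 0, Ψ₀′(z)/Ψ₀(z) = −n·ξ₀(z)/(Ω₀(z) + z·ξ₀(z)). -/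
/-- If the self-similar scalar `Ψ(τ,ρ) = Ψ₀(τ/ρ)/ρ^n` satisfies the
consistency relation `Ψ̇ Ω = Ψ̂ ξ` with `Ω(τ,ρ) = Ω₀(τ/ρ)/ρ` and `ξ(τ,ρ) = ξ₀(τ/ρ)/ρ`,
then `Ψ₀′(z)·(Ω₀(z) + z ξ₀(z)) = −n Ψ₀(z) ξ₀(z)` on the interval `I`; in particular,
where `Ψ₀ ≠ 0` and `Ω₀ + z ξ₀ ≠ 0`, `Ψ₀′/Ψ₀ = −n ξ₀/(Ω₀ + z ξ₀)`. -/
theorem stmt_1 (n : ℕ) (I : Set ℝ) (hI : I.OrdConnected)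
    (Ψ₀ Ω₀ ξ₀ : ℝ → ℝ)
    (hΨ : ∀ z ∈ I, DifferentiableAt ℝ Ψ₀ z)
    (hΩ : ∀ z ∈ I, DifferentiableAt ℝ Ω₀ z)
    (hξ : ∀ z ∈ I, DifferentiableAt ℝ ξ₀ z)
    (hcons : ∀ τ ρ : ℝ, 0 < ρ → τ / ρ ∈ I →
      deriv (fun t => Ψ₀ (t / ρ) / ρ ^ n) τ * (Ω₀ (τ / ρ) / ρ) =
      deriv (fun r => Ψ₀ (τ / r) / r ^ n) ρ * (ξ₀ (τ / ρ) / ρ)) :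
    ∀ z ∈ I, deriv Ψ₀ z * (Ω₀ z + z * ξ₀ z) = -(n : ℝ) * Ψ₀ z * ξ₀ z ∧
      (Ψ₀ z ≠ 0 → Ω₀ z + z * ξ₀ z ≠ 0 →
        deriv Ψ₀ z / Ψ₀ z = -(n : ℝ) * ξ₀ z / (Ω₀ z + z * ξ₀ z)) := by
  intro z hz
  have hz1 : z / (1 : ℝ) ∈ I := by simpa using hz
  have key := hcons z 1 one_pos hz1
  -- simplify the first deriv
  have h1 : (fun t : ℝ => Ψ₀ (t / 1) / 1 ^ n) = Ψ₀ := by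
    funext t; simp
  rw [h1] at key
  -- compute the second deriv
  have hd : HasDerivAt (fun r : ℝ => Ψ₀ (z / r) / r ^ n)
      ((deriv Ψ₀ z * -z * 1 ^ n - Ψ₀ z * ((n : ℝ) * 1 ^ (n - 1) * 1)) / (1 ^ n) ^ 2) 1 := by
    have hinner : HasDerivAt (fun r : ℝ => z / r) (-z) 1 := by
      have := ((hasDerivAt_inv one_ne_zero).const_mul z)
      simpa [div_eq_mul_inv] using this
    have houter : HasDerivAt Ψ₀ (deriv Ψ₀ z) (z / 1) := by
      simpa using (hΨ z hz).hasDerivAt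
    have hcomp : HasDerivAt (fun r : ℝ => Ψ₀ (z / r)) (deriv Ψ₀ z * -z) 1 := by
      exact houter.comp 1 hinner
    have hpow : HasDerivAt (fun r : ℝ => r ^ n) ((n : ℝ) * 1 ^ (n - 1) * 1) 1 := by
      exact (hasDerivAt_id (1:ℝ)).pow n
    have h := hcomp.div hpow (by simp : (1:ℝ)^n ≠ 0)
    exact h.congr_deriv (by simp)
  have hd' : deriv (fun r : ℝ => Ψ₀ (z / r) / r ^ n) 1
      = -(deriv Ψ₀ z * z) - (n : ℝ) * Ψ₀ z := by
    have := hd.deriv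
    rw [this]; ring
  rw [hd'] at key
  simp only [div_one] at key
  have hmain : deriv Ψ₀ z * (Ω₀ z + z * ξ₀ z) = -(n : ℝ) * Ψ₀ z * ξ₀ z := by
    nlinarith [key]
  refine ⟨hmain, fun hΨ0 hden => ?_⟩
  field_simp
  rw [← neg_div, eq_div_iff (by intro h; apply hden; linarith)]
  linarith [hmain]
end

section
/- Let I ⊆ ℝ be an interval and let Ω₀, ξ₀ : ℝ → ℝ be differentiable on I with ξ₀(z) ≠ 0 and Ω₀(z) + z·ξ₀(z) ≠ 0 for all z ∈ I, satisfying the coupled system Ω₀′(z) = −ξ₀(z)·Ω₀(z)/(Ω₀(z) + z·ξ₀(z)) and ξ₀′(z) = −ξ₀(z)²/(Ω₀(z) + z·ξ₀(z)) on I. Then the ratio Ω₀/ξ₀ is constant on I; that is, there exists k ∈ ℝ such that Ω₀(z) = k·ξ₀(z) for all z ∈ I. -/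
/-- The coupled system `Ω₀′ = −ξ₀ Ω₀/(Ω₀ + z ξ₀)`,
`ξ₀′ = −ξ₀²/(Ω₀ + z ξ₀)` on an interval (with `ξ₀ ≠ 0` and `Ω₀ + z ξ₀ ≠ 0`)
forces the ratio `Ω₀/ξ₀` to be constant: `Ω₀ = k ξ₀` for some `k`. -/
theorem stmt_2 (I : Set ℝ) (hI : I.OrdConnected) (Ω₀ ξ₀ : ℝ → ℝ)
    (hΩd : ∀ z ∈ I, DifferentiableAt ℝ Ω₀ z)
    (hξd : ∀ z ∈ I, DifferentiableAt ℝ ξ₀ z)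
    (hξ : ∀ z ∈ I, ξ₀ z ≠ 0)
    (hden : ∀ z ∈ I, Ω₀ z + z * ξ₀ z ≠ 0)
    (hΩ' : ∀ z ∈ I, deriv Ω₀ z = -ξ₀ z * Ω₀ z / (Ω₀ z + z * ξ₀ z))
    (hξ' : ∀ z ∈ I, deriv ξ₀ z = -(ξ₀ z) ^ 2 / (Ω₀ z + z * ξ₀ z)) :
    ∃ k : ℝ, ∀ z ∈ I, Ω₀ z = k * ξ₀ z := by
  rcases Set.eq_empty_or_nonempty I with h | ⟨x₀, hx₀⟩
  · exact ⟨0, fun z hz => by simp [h] at hz⟩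
  set g : ℝ → ℝ := fun z => Ω₀ z / ξ₀ z with hg
  have hconv : Convex ℝ I := convex_iff_ordConnected.2 hI
  have hder : ∀ z ∈ I, HasDerivWithinAt g 0 I z := by
    intro z hz
    have h1 : HasDerivAt Ω₀ (deriv Ω₀ z) z := (hΩd z hz).hasDerivAt
    have h2 : HasDerivAt ξ₀ (deriv ξ₀ z) z := (hξd z hz).hasDerivAt
    have h3 := h1.div h2 (hξ z hz)
    have h0 : (deriv Ω₀ z * ξ₀ z - Ω₀ z * deriv ξ₀ z) / ξ₀ z ^ 2 = 0 := by
      rw [hΩ' z hz, hξ' z hz]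
      field_simp
      ring
    rw [h0] at h3
    exact h3.hasDerivWithinAt
  have hconst : ∀ z ∈ I, g z = g x₀ := by
    intro z hz
    have := hconv.norm_image_sub_le_of_norm_hasFDerivWithin_le
      (f' := fun _ => ContinuousLinearMap.smulRight (1 : ℝ →L[ℝ] ℝ) (0:ℝ))
      (fun x hx => (hder x hx).hasFDerivWithinAt) (C := 0)
      (fun x _ => by simp) hx₀ hz
    simpa [sub_eq_zero] using this
  refine ⟨g x₀, fun z hz => ?_⟩
  have := hconst z hz
  rw [← this]
  simp only [g]
  rw [div_mul_cancel₀ _ (hξ z hz)]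
end

section
/- Let I ⊆ ℝ be a nondegenerate open interval and let Ω₀, ξ₀ : ℝ → ℝ be differentiable on I with ξ₀(z) ≠ 0, Ω₀(z) ≠ 0, and Ω₀(z) + z·ξ₀(z) ≠ 0 for all z ∈ I, satisfying Ω₀′(z) = −ξ₀(z)·Ω₀(z)/(Ω₀(z) + z·ξ₀(z)) and ξ₀′(z) = −ξ₀(z)²/(Ω₀(z) + z·ξ₀(z)) on I. Then there exist real constants A ≠ 0 and B ≠ 0 such that A·z + B ≠ 0 for all z ∈ I and ξ₀(z) = −1/(A·z + B), Ω₀(z) = −B/(A·(A·z + B)) for all z ∈ I. -/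
lemma myconst_of_deriv (I : Set ℝ) (hIo : IsOpen I) (hconv : Convex ℝ I) (f : ℝ → ℝ)
    (hd : ∀ z ∈ I, HasDerivAt f 0 z) : ∀ x ∈ I, ∀ y ∈ I, f x = f y := by
  intro x hx y hy
  refine hconv.is_const_of_fderivWithin_eq_zero
    (fun z hz => ((hd z hz).differentiableAt).differentiableWithinAt) (fun z hz => ?_) hx hy
  rw [fderivWithin_of_isOpen hIo hz, ((hd z hz).hasFDerivAt).fderiv]
  ext w; simp

/-- On a nondegenerate open interval, the coupled system
`Ω₀′ = −ξ₀ Ω₀/(Ω₀ + z ξ₀)`, `ξ₀′ = −ξ₀²/(Ω₀ + z ξ₀)` (with `ξ₀, Ω₀, Ω₀ + z ξ₀`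
nowhere vanishing) has the general solution `ξ₀ = −1/(Az+B)`,
`Ω₀ = −B/(A(Az+B))` with integration constants `A ≠ 0`, `B ≠ 0`. -/
theorem stmt_3 (I : Set ℝ) (hIo : IsOpen I) (hI : I.OrdConnected) (hne : I.Nonempty)
    (Ω₀ ξ₀ : ℝ → ℝ)
    (hΩd : ∀ z ∈ I, DifferentiableAt ℝ Ω₀ z)
    (hξd : ∀ z ∈ I, DifferentiableAt ℝ ξ₀ z)
    (hξ : ∀ z ∈ I, ξ₀ z ≠ 0)
    (hΩ : ∀ z ∈ I, Ω₀ z ≠ 0)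
    (hden : ∀ z ∈ I, Ω₀ z + z * ξ₀ z ≠ 0)
    (hΩ' : ∀ z ∈ I, deriv Ω₀ z = -ξ₀ z * Ω₀ z / (Ω₀ z + z * ξ₀ z))
    (hξ' : ∀ z ∈ I, deriv ξ₀ z = -(ξ₀ z) ^ 2 / (Ω₀ z + z * ξ₀ z)) :
    ∃ A B : ℝ, A ≠ 0 ∧ B ≠ 0 ∧ (∀ z ∈ I, A * z + B ≠ 0) ∧
      (∀ z ∈ I, ξ₀ z = -1 / (A * z + B)) ∧
      (∀ z ∈ I, Ω₀ z = -B / (A * (A * z + B))) := by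
  have hconv : Convex ℝ I := convex_iff_ordConnected.mpr hI
  obtain ⟨z₀, hz₀⟩ := hne
  -- the ratio Ω₀/ξ₀ is constant
  have hrd : ∀ z ∈ I, HasDerivAt (fun z => Ω₀ z / ξ₀ z) 0 z := by
    intro z hz
    have h1 : HasDerivAt Ω₀ (deriv Ω₀ z) z := (hΩd z hz).hasDerivAt
    have h2 : HasDerivAt ξ₀ (deriv ξ₀ z) z := (hξd z hz).hasDerivAt
    have := h1.div h2 (hξ z hz)
    refine this.congr_deriv ?_
    rw [hΩ' z hz, hξ' z hz]
    field_simp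
    ring
  obtain ⟨c, hc⟩ : ∃ c : ℝ, c = Ω₀ z₀ / ξ₀ z₀ := ⟨_, rfl⟩
  have hrc : ∀ z ∈ I, Ω₀ z = c * ξ₀ z := by
    intro z hz
    have h := myconst_of_deriv I hIo hconv _ hrd z hz z₀ hz₀
    rw [hc, ← h, div_mul_cancel₀ _ (hξ z hz)]
  have hc0 : c ≠ 0 := by
    have := hrc z₀ hz₀
    intro h; rw [h, zero_mul] at this; exact hΩ z₀ hz₀ this
  have hcz : ∀ z ∈ I, c + z ≠ 0 := by
    intro z hz
    have hd := hden z hz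
    rw [hrc z hz] at hd
    intro h
    exact hd (by rw [show c = -z by linarith]; ring)
  -- (c + z) * ξ₀ z is constant
  have hfd : ∀ z ∈ I, HasDerivAt (fun z => (c + z) * ξ₀ z) 0 z := by
    intro z hz
    have h2 : HasDerivAt ξ₀ (deriv ξ₀ z) z := (hξd z hz).hasDerivAt
    have h1 : HasDerivAt (fun z : ℝ => c + z) 1 z := (hasDerivAt_id z).const_add c
    have := h1.mul h2
    refine this.congr_deriv ?_
    have hcc : c * ξ₀ z + z * ξ₀ z = (c + z) * ξ₀ z := by ring
    rw [hξ' z hz, hrc z hz, hcc]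
    field_simp [hξ z hz, hcz z hz]
    ring
  obtain ⟨k, hk⟩ : ∃ k : ℝ, k = (c + z₀) * ξ₀ z₀ := ⟨_, rfl⟩
  have hfk : ∀ z ∈ I, (c + z) * ξ₀ z = k := by
    intro z hz
    rw [hk]; exact myconst_of_deriv I hIo hconv _ hfd z hz z₀ hz₀
  have hk0 : k ≠ 0 := by rw [hk]; exact mul_ne_zero (hcz z₀ hz₀) (hξ z₀ hz₀)
  have hxi : ∀ z ∈ I, ξ₀ z = k / (c + z) := by
    intro z hz
    rw [← hfk z hz, mul_comm, mul_div_assoc, div_self (hcz z hz), mul_one]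
  refine ⟨-1 / k, -c / k, ?_, ?_, ?_, ?_, ?_⟩
  · exact div_ne_zero (by norm_num) hk0
  · exact div_ne_zero (neg_ne_zero.mpr hc0) hk0
  · intro z hz
    have h : -1 / k * z + -c / k = -((z + c) / k) := by field_simp; ring
    rw [h]
    simp only [neg_ne_zero]
    exact div_ne_zero (fun h => hcz z hz (by linarith)) hk0
  · intro z hz
    have h2 : -1 / k * z + -c / k = -((z + c) / k) := by field_simp; ring
    rw [hxi z hz, h2, neg_div_neg_eq, one_div_div, add_comm z c]
  · intro z hz
    have h1 := hcz z hz
    have h3 : z + c ≠ 0 := fun h => h1 (by linarith)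
    have h2 : -1 / k * z + -c / k = -((z + c) / k) := by field_simp; ring
    have e : -1 / k * -((z + c) / k) = (z + c) / k ^ 2 := by field_simp
    have e2 : -(-c / k) / ((z + c) / k ^ 2) = c * k / (z + c) := by
      field_simp
    rw [hrc z hz, hxi z hz, h2, e, e2, add_comm z c, mul_div_assoc']
end

section
/- (Proposition: any dimensionless scalar in a simultaneously rotating and twisting LRS spacetime is constant.) Let I ⊆ ℝ be an interval, let Ψ₀, Ω₀, ξ₀ : ℝ → ℝ with Ψ₀ differentiable on I and Ω₀(z) + z·ξ₀(z) ≠ 0 for all z ∈ I. Define, for τ ∈ ℝ and ρ > 0 with τ/ρ ∈ I, the dimensionless scalar Ψ(τ,ρ) = Ψ₀(τ/ρ) and the scalars Ω(τ,ρ) = Ω₀(τ/ρ)/ρ, ξ(τ,ρ) = ξ₀(τ/ρ)/ρ. If the consistency relation (∂Ψ/∂τ)(τ,ρ) · Ω(τ,ρ) = (∂Ψ/∂ρ)(τ,ρ) · ξ(τ,ρ) holds for all such (τ,ρ), then Ψ₀ is constant on I. -/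
/-- Proposition: any dimensionless scalar `Ψ(τ,ρ) = Ψ₀(τ/ρ)` in a
simultaneously rotating and twisting LRS spacetime (i.e. satisfying the consistency
relation `Ψ̇ Ω = Ψ̂ ξ` with `Ω = Ω₀(τ/ρ)/ρ`, `ξ = ξ₀(τ/ρ)/ρ` and `Ω₀ + z ξ₀ ≠ 0`)
must be constant. -/
theorem stmt_5 (I : Set ℝ) (hI : I.OrdConnected) (Ψ₀ Ω₀ ξ₀ : ℝ → ℝ)
    (hΨ : ∀ z ∈ I, DifferentiableAt ℝ Ψ₀ z)
    (hden : ∀ z ∈ I, Ω₀ z + z * ξ₀ z ≠ 0)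
    (hcons : ∀ τ ρ : ℝ, 0 < ρ → τ / ρ ∈ I →
      deriv (fun t => Ψ₀ (t / ρ)) τ * (Ω₀ (τ / ρ) / ρ) =
      deriv (fun r => Ψ₀ (τ / r)) ρ * (ξ₀ (τ / ρ) / ρ)) :
    ∃ c : ℝ, ∀ z ∈ I, Ψ₀ z = c := by
  have hd0 : ∀ z ∈ I, deriv Ψ₀ z = 0 := by
    intro z hz
    have hz1 : z / (1 : ℝ) ∈ I := by simpa using hz
    have key := hcons z 1 one_pos hz1
    have h1 : deriv (fun t => Ψ₀ (t / (1 : ℝ))) z = deriv Ψ₀ z := by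
      simp [div_one]
    have hinner : HasDerivAt (fun r : ℝ => z / r) (-z) 1 := by
      have := (hasDerivAt_inv (one_ne_zero)).const_mul z
      simpa [div_eq_mul_inv] using this
    have h2 : HasDerivAt (fun r : ℝ => Ψ₀ (z / r)) (deriv Ψ₀ z * (-z)) 1 := by
      have hΨz : HasDerivAt Ψ₀ (deriv Ψ₀ z) ((fun r : ℝ => z / r) 1) := by
        simpa using (hΨ z hz).hasDerivAt
      exact hΨz.comp 1 hinner
    rw [h1, h2.deriv] at key
    simp only [div_one] at key
    have : deriv Ψ₀ z * (Ω₀ z + z * ξ₀ z) = 0 := by ring_nf; ring_nf at key; linarith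
    rcases mul_eq_zero.1 this with h | h
    · exact h
    · exact absurd h (hden z hz)
  -- constancy on an ord-connected set from zero derivative
  rcases Set.eq_empty_or_nonempty I with hIe | ⟨z₀, hz₀⟩
  · exact ⟨0, by simp [hIe]⟩
  refine ⟨Ψ₀ z₀, ?_⟩
  have main : ∀ a b : ℝ, a ∈ I → b ∈ I → a ≤ b → Ψ₀ b = Ψ₀ a := by
    intro a b ha hb hab
    have hsub : Set.Icc a b ⊆ I := hI.out ha hb
    have := constant_of_has_deriv_right_zero (f := Ψ₀) (a := a) (b := b)
      (fun x hx => ((hΨ x (hsub hx)).continuousAt).continuousWithinAt)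
      (fun x hx => by
        have := (hΨ x (hsub ⟨hx.1, hx.2.le⟩)).hasDerivAt
        rw [hd0 x (hsub ⟨hx.1, hx.2.le⟩)] at this
        exact this.hasDerivWithinAt)
    exact this b ⟨hab, le_refl b⟩
  intro z hz
  rcases le_total z z₀ with h | h
  · exact (main z z₀ hz hz₀ h).symm
  · exact main z₀ z hz₀ hz h
end

section
/- (Constraint C₂.) Let 𝒜, Θ, Ω, ξ, Σ, φ, Ωdot, Ωhat be real numbers with Ω ≠ 0 and ξ ≠ 0, satisfying the LRS field equations for the rotation, Ωdot = 𝒜·ξ + Ω·(Σ − (2/3)·Θ) and Ωhat = (𝒜 − φ)·Ω, together with the consistency relation Ωdot·Ω = Ωhat·ξ. Then φ = −(Ω/ξ)·(Σ − (2/3)·Θ). -/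
/-- Constraint C₂: from the evolution and propagation equations for
the rotation, `Ω̇ = 𝒜ξ + Ω(Σ − (2/3)Θ)` and `Ω̂ = (𝒜 − φ)Ω`, together with the
consistency relation `Ω̇ Ω = Ω̂ ξ` (and `Ω ≠ 0`, `ξ ≠ 0`), one gets
`φ = −(Ω/ξ)(Σ − (2/3)Θ)`. -/
theorem stmt_6 (A Th Om xi Sg ph Omdot Omhat : ℝ)
    (hOm : Om ≠ 0) (hxi : xi ≠ 0)
    (h1 : Omdot = A * xi + Om * (Sg - (2/3) * Th))
    (h2 : Omhat = (A - ph) * Om)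
    (h3 : Omdot * Om = Omhat * xi) :
    ph = -(Om / xi) * (Sg - (2/3) * Th) := by
  subst h1 h2
  have key : Om * (Sg - (2/3) * Th) = -ph * xi := by
    have h4 : Om * (Om * (Sg - (2/3) * Th)) = Om * (-ph * xi) := by ring_nf; ring_nf at h3; linarith
    exact mul_left_cancel₀ hOm h4
  field_simp
  linarith [key]
end

section
/- (Constraint C₁.) Let 𝒜, Θ, Ω, ξ, Σ, φ, ℋ, ξdot, ξhat be real numbers with Ω ≠ 0 and ξ ≠ 0, satisfying the LRS field equations for the twist, ξdot = ((1/2)·Σ − (1/3)·Θ)·ξ + (𝒜 − (1/2)·φ)·Ω + (1/2)·ℋ and ξhat = −φ·ξ + ((1/3)·Θ + Σ)·Ω, the consistency relation ξdot·Ω = ξhat·ξ, and the constraint φ·ξ = −Ω·(Σ − (2/3)·Θ). Then ℋ = 3·ξ·Σ − (2·𝒜 + (Ω/ξ)·(Σ − (2/3)·Θ))·Ω. -/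
/-- Constraint C₁: from the evolution and propagation equations for
the twist, `ξ̇ = ((1/2)Σ − (1/3)Θ)ξ + (𝒜 − (1/2)φ)Ω + (1/2)ℋ` and
`ξ̂ = −φξ + ((1/3)Θ + Σ)Ω`, together with the consistency relation `ξ̇ Ω = ξ̂ ξ`
and the constraint `φξ = −Ω(Σ − (2/3)Θ)` (and `Ω ≠ 0`, `ξ ≠ 0`), one gets
`ℋ = 3ξΣ − (2𝒜 + (Ω/ξ)(Σ − (2/3)Θ))Ω`. -/
theorem stmt_7 (A Th Om xi Sg ph H xidot xihat : ℝ)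
    (hOm : Om ≠ 0) (hxi : xi ≠ 0)
    (h1 : xidot = ((1/2) * Sg - (1/3) * Th) * xi + (A - (1/2) * ph) * Om + (1/2) * H)
    (h2 : xihat = -ph * xi + ((1/3) * Th + Sg) * Om)
    (h3 : xidot * Om = xihat * xi)
    (hC2 : ph * xi = -Om * (Sg - (2/3) * Th)) :
    H = 3 * xi * Sg - (2 * A + (Om / xi) * (Sg - (2/3) * Th)) * Om := by
  subst h1 h2
  have h5 : H * xi = 3*xi*Sg*xi - (2*A*xi + Om*(Sg-2/3*Th))*Om := by
    apply mul_right_cancel₀ hOm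
    linear_combination 2*xi*h3 + (Om^2 - 2*xi^2)*hC2
  field_simp
  linear_combination 3*h5
end

section
/- (Constraint C₃.) Let Θ, Ω, ξ, Σ, φ, ℰ, ℋ, μ, p, Q, Π, ℋdot, ℋhat be real numbers with Ω ≠ 0 and ξ ≠ 0, satisfying the LRS field equations ℋdot = −3·ξ·ℰ + ((3/2)·Σ − Θ)·ℋ + Ω·Q + (3/2)·ξ·Π and ℋhat = −(3·ℰ + μ + p − (1/2)·Π)·Ω − (3/2)·φ·ℋ − ξ·Q, the consistency relation ℋdot·Ω = ℋhat·ξ, and the constraint φ·ξ = −Ω·(Σ − (2/3)·Θ). Then Q·(Ω² + ξ²) = −Ω·ξ·(μ + p + Π); equivalently Q = −((Ω/ξ)/(1 + (Ω/ξ)²))·(μ + p + Π). -/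
/-- Constraint C₃: from the evolution and propagation equations for
the magnetic Weyl scalar, `ℋ̇ = −3ξℰ + ((3/2)Σ − Θ)ℋ + ΩQ + (3/2)ξΠ` and
`ℋ̂ = −(3ℰ + μ + p − (1/2)Π)Ω − (3/2)φℋ − ξQ`, with the consistency relation
`ℋ̇ Ω = ℋ̂ ξ` and the constraint `φξ = −Ω(Σ − (2/3)Θ)` (and `Ω ≠ 0`, `ξ ≠ 0`),
one gets `Q(Ω² + ξ²) = −Ωξ(μ + p + Π)`, equivalently
`Q = −((Ω/ξ)/(1 + (Ω/ξ)²))(μ + p + Π)`. -/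
theorem stmt_8 (Th Om xi Sg ph E H mu p Q Pi Hdot Hhat : ℝ)
    (hOm : Om ≠ 0) (hxi : xi ≠ 0)
    (h1 : Hdot = -3 * xi * E + ((3/2) * Sg - Th) * H + Om * Q + (3/2) * xi * Pi)
    (h2 : Hhat = -(3 * E + mu + p - (1/2) * Pi) * Om - (3/2) * ph * H - xi * Q)
    (h3 : Hdot * Om = Hhat * xi)
    (hC2 : ph * xi = -Om * (Sg - (2/3) * Th)) :
    Q * (Om ^ 2 + xi ^ 2) = -Om * xi * (mu + p + Pi) ∧
      Q = -((Om / xi) / (1 + (Om / xi) ^ 2)) * (mu + p + Pi) := by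
  subst h1 h2
  have key : Q * (Om ^ 2 + xi ^ 2) = -Om * xi * (mu + p + Pi) := by
    linear_combination h3 - (3/2) * H * hC2
  refine ⟨key, ?_⟩
  have hden : Om ^ 2 + xi ^ 2 ≠ 0 := by positivity
  field_simp
  linear_combination key
end
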